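/- For every integer l ≥ 2, every real x with 0 < x ≤ 1/(l+1), and every integer t with 1 ≤ t ≤ l-1, we have (1-x)^l ≤ ((1-(t+1)x)/(1-tx))^(l-t). -/

import Mathlib

private lemma samuels_step_u (m : ℕ) (u : ℝ) (hu0 : 0 ≤ u) (hu1 : u ≤ 1)
    (hm : (m : ℝ) * (u * (1 + u)) ≤ 1) :
    1 ≤ (1 + u) ^ (m + 1) * (1 - u) ^ m := by
  have hb : 1 - (m : ℝ) * u ^ 2 ≤ (1 - u ^ 2) ^ m := by
    have h := one_add_mul_le_pow (a := -u ^ 2) (by nlinarith) m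
    calc 1 - (m : ℝ) * u ^ 2 = 1 + (m : ℝ) * (-u ^ 2) := by ring
      _ ≤ (1 + -u ^ 2) ^ m := h
      _ = (1 - u ^ 2) ^ m := by rw [sub_eq_add_neg]
  have h1 : (1 : ℝ) ≤ (1 + u) * (1 - (m : ℝ) * u ^ 2) := by nlinarith
  calc (1 : ℝ) ≤ (1 + u) * (1 - (m : ℝ) * u ^ 2) := h1
    _ ≤ (1 + u) * (1 - u ^ 2) ^ m := by
        exact mul_le_mul_of_nonneg_left hb (by linarith)
    _ = (1 + u) ^ (m + 1) * (1 - u) ^ m := by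
        rw [show (1 : ℝ) - u ^ 2 = (1 + u) * (1 - u) by ring, mul_pow, pow_succ]
        ring

private lemma samuels_step (m : ℕ) (a x : ℝ) (ha : 0 < a) (hx0 : 0 ≤ x) (hxa : x ≤ a)
    (hm : (m : ℝ) * x * (a + x) ≤ a ^ 2) :
    a ^ (m + 1) * a ^ m ≤ (a + x) ^ (m + 1) * (a - x) ^ m := by
  have hu0 : 0 ≤ x / a := by positivity
  have hu1 : x / a ≤ 1 := by
    rw [div_le_one ha]; exact hxa
  have hmu : (m : ℝ) * ((x / a) * (1 + x / a)) ≤ 1 := by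
    rw [show (m : ℝ) * ((x / a) * (1 + x / a)) = ((m : ℝ) * x * (a + x)) / a ^ 2 by
      field_simp, div_le_one (by positivity)]
    exact hm
  have key := samuels_step_u m (x / a) hu0 hu1 hmu
  calc a ^ (m + 1) * a ^ m
      ≤ ((1 + x / a) ^ (m + 1) * (1 - x / a) ^ m) * (a ^ (m + 1) * a ^ m) :=
        le_mul_of_one_le_left (by positivity) key
    _ = ((1 + x / a) * a) ^ (m + 1) * ((1 - x / a) * a) ^ m := by
        rw [mul_pow, mul_pow]; ring
    _ = (a + x) ^ (m + 1) * (a - x) ^ m := by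
        rw [show (1 + x / a) * a = a + x by field_simp,
            show (1 - x / a) * a = a - x by field_simp]

private lemma samuels_aux (l : ℕ) (x : ℝ) (hx0 : 0 < x) (hx1 : x ≤ 1 / (l + 1)) :
    ∀ t : ℕ, t + 1 ≤ l → (1 - x) ^ l ≤ ((1 - (t + 1) * x) / (1 - t * x)) ^ (l - t) := by
  have hl1 : (0 : ℝ) < (l : ℝ) + 1 := by positivity
  have hlx : ((l : ℝ) + 1) * x ≤ 1 := by
    rw [le_div_iff₀ hl1] at hx1; linarith
  intro t
  induction t with
  | zero => intro _; simp
  | succ t ih =>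
    intro h
    have ht2 : t + 2 ≤ l := by omega
    have ih' := ih (by omega)
    refine ih'.trans ?_
    have htl : ((t : ℝ) + 2) ≤ (l : ℝ) + 1 := by
      have : (t : ℝ) + 2 ≤ (l : ℝ) := by exact_mod_cast ht2
      linarith
    have hc : 0 ≤ 1 - ((t : ℝ) + 2) * x := by nlinarith
    have ha : 0 < 1 - ((t : ℝ) + 1) * x := by nlinarith
    have hb : 0 < 1 - (t : ℝ) * x := by nlinarith
    set m : ℕ := l - (t + 1) with hm_def
    have hlt : l - t = m + 1 := by omega
    have hlt1 : l - (t + 1) = m := rfl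
    have hMcast : ((m : ℝ)) = (l : ℝ) - t - 1 := by
      rw [hm_def, Nat.cast_sub (by omega)]; push_cast; ring
    have hkey : (m : ℝ) * x * ((1 - ((t : ℝ) + 1) * x) + x) ≤ (1 - ((t : ℝ) + 1) * x) ^ 2 := by
      have hfac : (0 : ℝ) ≤ (1 - ((l : ℝ) + 1) * x) * (1 - (t : ℝ) * x) := by
        apply mul_nonneg (by linarith) (le_of_lt hb)
      rw [hMcast]; nlinarith
    have hstep := samuels_step m (1 - ((t : ℝ) + 1) * x) x ha (le_of_lt hx0)
      (by linarith) hkey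
    have goal' : ((1 - ((t : ℝ) + 1) * x) / (1 - (t : ℝ) * x)) ^ (m + 1)
        ≤ ((1 - ((t : ℝ) + 2) * x) / (1 - ((t : ℝ) + 1) * x)) ^ m := by
      rw [div_pow, div_pow, div_le_div_iff₀ (by positivity) (by positivity)]
      calc (1 - ((t : ℝ) + 1) * x) ^ (m + 1) * (1 - ((t : ℝ) + 1) * x) ^ m
          ≤ ((1 - ((t : ℝ) + 1) * x) + x) ^ (m + 1) * ((1 - ((t : ℝ) + 1) * x) - x) ^ m :=
            hstep
        _ = (1 - ((t : ℝ) + 2) * x) ^ m * (1 - (t : ℝ) * x) ^ (m + 1) := by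
            rw [show (1 - ((t : ℝ) + 1) * x) + x = 1 - (t : ℝ) * x by ring,
                show (1 - ((t : ℝ) + 1) * x) - x = 1 - ((t : ℝ) + 2) * x by ring]
            ring
    rw [hlt]
    push_cast
    convert goal' using 3
    · rfl
    · ring

/-- For every integer `l ≥ 2`, real `x` with `0 < x ≤ 1/(l+1)`, and integer `t` with
`1 ≤ t ≤ l-1`, we have `(1-x)^l ≤ ((1-(t+1)x)/(1-tx))^(l-t)`. -/
theorem samuels_Q0_minimal (l : ℕ) (hl : 2 ≤ l) (x : ℝ) (hx0 : 0 < x)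
    (hx1 : x ≤ 1 / (l + 1)) (t : ℕ) (ht1 : 1 ≤ t) (htl : t ≤ l - 1) :
    (1 - x) ^ l ≤ ((1 - (t + 1) * x) / (1 - t * x)) ^ (l - t) := by
  exact samuels_aux l x hx0 hx1 t (by omega)
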